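/- Let r ≥ 2 and n ≥ 2. Let π₀ = B(V) be a q-subgeometry of PG(r-1,q^n) and let l_∞ = PG(U) be a line of PG(r-1,q^n) that is not contained in the extension of any hyperplane of π₀. Then the splash S(π₀,l_∞) is an F_q-linear set of rank r: there exists a K-subspace U' of U with dim_K U' = r such that S(π₀,l_∞) = B(U'). -/

import Mathlib

open Submodule Module

/-- `BSet L X` is the set of projective points (1-dimensional `L`-subspaces of `W`)
spanned by the nonzero vectors of `X`. -/
def BSet (L : Type*) [Field L] {W : Type*} [AddCommGroup W] [Module L W]
    (X : Set W) : Set (Submodule L W) :=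
  {P | ∃ x ∈ X, x ≠ 0 ∧ P = Submodule.span L {x}}

/-- The splash of the `q`-subgeometry `B(V)` of `PG(W)` on the line `PG(U)`:
the set of points of `PG(U)` lying in the `L`-span (extension) of some hyperplane
(`(r-1)`-dimensional `K`-subspace) of `V`. -/
def Splash (K L : Type*) [Field K] [Field L] [Algebra K L]
    {W : Type*} [AddCommGroup W] [Module L W] [Module K W] [IsScalarTower K L W]
    (V : Submodule K W) (U : Submodule L W) (r : ℕ) : Set (Submodule L W) :=
  {P | Module.finrank L P = 1 ∧ P ≤ U ∧
    ∃ H : Submodule K W, H ≤ V ∧ Module.finrank K H = r - 1 ∧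
      P ≤ Submodule.span L (H : Set W)}

set_option maxHeartbeats 4000000 in
/-- the splash of a `q`-subgeometry on a line is an `F_q`-linear set of
rank `r`. -/
theorem splash_is_linear_set
    (K L : Type*) [Field K] [Field L] [Algebra K L] [Fintype K] [Fintype L]
    (r n : ℕ) (hr : 2 ≤ r) (hn : 2 ≤ n) (hrank : Module.finrank K L = n)
    (V : Submodule K (Fin r → L))
    (hVrank : Module.finrank K V = r)
    (hVspan : Submodule.span L (V : Set (Fin r → L)) = ⊤)
    (U : Submodule L (Fin r → L)) (hU : Module.finrank L U = 2)
    (hext : ∀ H : Submodule K (Fin r → L), H ≤ V → Module.finrank K H = r - 1 →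
      ¬ U ≤ Submodule.span L (H : Set (Fin r → L))) :
    ∃ U' : Submodule K (Fin r → L), U' ≤ U.restrictScalars K ∧
      Module.finrank K U' = r ∧
      BSet L (U' : Set (Fin r → L)) = Splash K L V U r := by
  classical
  have hFDL : FiniteDimensional K L := FiniteDimensional.of_finrank_pos (by omega)
  have hFDV : FiniteDimensional K V := FiniteDimensional.of_finrank_pos (by omega)
  -- basis of V over K
  set b : Basis (Fin r) K V := Module.finBasisOfFinrankEq K V hVrank with hb
  set w : Fin r → (Fin r → L) := fun i => (b i : Fin r → L) with hw
  have hwV : ∀ i, w i ∈ V := fun i => (b i).2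
  have hspanw : ⊤ ≤ span L (Set.range w) := by
    rw [← hVspan]
    have h1 : span K (Set.range w) = V := by
      have := congrArg (Submodule.map V.subtype) b.span_eq
      rwa [Submodule.map_span, Submodule.map_top, Submodule.range_subtype,
        ← Set.range_comp] at this
    rw [← h1, span_span_of_tower]
  have hcard : Fintype.card (Fin r) = Module.finrank L (Fin r → L) := by
    simp [Module.finrank_pi]
  set c : Basis (Fin r) L (Fin r → L) := basisOfTopLeSpanOfCardEqFinrank w hspanw hcard
    with hc
  have hcw : ∀ i, c i = w i := fun i => by
    rw [hc, coe_basisOfTopLeSpanOfCardEqFinrank]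
  -- the linear forms with K-rational coefficients
  set φ : (Fin r → K) → ((Fin r → L) →ₗ[L] L) :=
    fun a => ∑ i, algebraMap K L (a i) • c.coord i with hφ
  have hφapply : ∀ a y, φ a y = ∑ i, algebraMap K L (a i) * c.repr y i := by
    intro a y
    simp [hφ, Basis.coord_apply, LinearMap.sum_apply, Algebra.smul_def]
  have hφw : ∀ a i, φ a (w i) = algebraMap K L (a i) := by
    intro a i
    rw [← hcw, hφapply]
    simp [Basis.repr_self_apply, Finsupp.single_apply, Finset.sum_ite_eq']
  -- value of φ on elements of V
  have hφV : ∀ (a : Fin r → K) (y : V), φ a (y : Fin r → L)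
      = algebraMap K L (∑ i, a i * b.repr y i) := by
    intro a y
    have h1 : (y : Fin r → L) = ∑ i, (b.repr y i : K) • w i := by
      have := congrArg (Subtype.val) (b.sum_repr y)
      rw [← this]
      simp only [Submodule.coe_sum, Submodule.coe_smul, hw]
    rw [h1, map_sum, map_sum]
    refine Finset.sum_congr rfl fun i _ => ?_
    rw [← algebraMap_smul L ((b.repr y i : K)) (w i), map_smul, hφw, smul_eq_mul,
      map_mul, mul_comm]
  -- key facts about the standard hyperplanes V ⊓ ker (φ a)
  have hkey : ∀ a : Fin r → K, a ≠ 0 →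
      Module.finrank K (V ⊓ (LinearMap.ker (φ a)).restrictScalars K : Submodule K (Fin r → L)) = r - 1 ∧
      span L (((V ⊓ (LinearMap.ker (φ a)).restrictScalars K) : Submodule K (Fin r → L)) : Set (Fin r → L)) = LinearMap.ker (φ a) := by
    intro a ha
    obtain ⟨j, hj⟩ := Function.ne_iff.mp ha
    have hαj : algebraMap K L (a j) ≠ 0 := fun h => hj <| by
      apply RingHom.injective (algebraMap K L); simpa using h
    constructor
    · -- finrank computation via rank-nullity
      set g : V →ₗ[K] L := ((φ a).restrictScalars K).comp V.subtype with hg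
      have hgval : ∀ y : V, g y = φ a (y : Fin r → L) := fun y => rfl
      have hgker : Submodule.map V.subtype (LinearMap.ker g) = V ⊓ (LinearMap.ker (φ a)).restrictScalars K := by
        have h1 : LinearMap.ker g = Submodule.comap V.subtype ((LinearMap.ker (φ a)).restrictScalars K) := by
          rw [hg, LinearMap.ker_comp, LinearMap.ker_restrictScalars]
        rw [h1, Submodule.map_comap_subtype]
      have hrange : Module.finrank K (LinearMap.range g) = 1 := by
        have hle : LinearMap.range g ≤ span K {(1 : L)} := by
          rintro _ ⟨y, rfl⟩
          rw [hgval, hφV a y, Algebra.algebraMap_eq_smul_one]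
          exact Submodule.smul_mem _ _ (Submodule.mem_span_singleton_self 1)
        have hmem : algebraMap K L (a j) ∈ LinearMap.range g := ⟨b j, by rw [hgval]; exact hφw a j⟩
        have h1 : Module.finrank K (LinearMap.range g) ≤ 1 := by
          have := Submodule.finrank_mono hle
          rwa [finrank_span_singleton (one_ne_zero)] at this
        have h2 : LinearMap.range g ≠ ⊥ := by
          intro h; rw [h] at hmem; exact hαj (by simpa using hmem)
        have h3 : Module.finrank K (LinearMap.range g) ≠ 0 := by
          haveI : Module.Finite K (LinearMap.range g) := inferInstance
          rw [ne_eq, Submodule.finrank_eq_zero]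
          exact h2
        omega
      have hrn := LinearMap.finrank_range_add_finrank_ker g
      rw [hVrank, hrange] at hrn
      rw [← hgker, Submodule.finrank_map_subtype_eq]
      omega
    · -- the L-span is exactly the kernel
      set h : Fin r → (Fin r → L) :=
        fun i => algebraMap K L (a j) • w i - algebraMap K L (a i) • w j with hh
      have hhHa : ∀ i, h i ∈ V ⊓ (LinearMap.ker (φ a)).restrictScalars K := by
        intro i
        refine Submodule.mem_inf.mpr ⟨?_, ?_⟩
        · rw [hh]; dsimp only
          rw [algebraMap_smul, algebraMap_smul]
          exact sub_mem (V.smul_mem _ (hwV i)) (V.smul_mem _ (hwV j))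
        · rw [Submodule.restrictScalars_mem, LinearMap.mem_ker, hh]
          dsimp only
          rw [map_sub, map_smul, map_smul, hφw, hφw, smul_eq_mul, smul_eq_mul]
          ring
      apply le_antisymm
      · rw [Submodule.span_le]
        intro x hx
        rw [SetLike.mem_coe] at hx
        exact (Submodule.mem_inf.mp hx).2
      · intro y hy
        rw [LinearMap.mem_ker, hφapply] at hy
        have hsum : ∑ i, (c.repr y i / algebraMap K L (a j)) • h i = y := by
          simp only [hh, smul_sub, smul_smul, div_mul_cancel₀ _ hαj, Finset.sum_sub_distrib,
            ← Finset.sum_smul]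
          have h2 : (∑ i, c.repr y i / algebraMap K L (a j) * algebraMap K L (a i)) = 0 := by
            have h3 : ∀ i ∈ Finset.univ, c.repr y i / algebraMap K L (a j) * algebraMap K L (a i)
                = (algebraMap K L (a i) * c.repr y i) / algebraMap K L (a j) := by
              intro i _; field_simp
            rw [Finset.sum_congr rfl h3, ← Finset.sum_div, hy, zero_div]
          rw [h2, zero_smul, sub_zero]
          conv_rhs => rw [← c.sum_repr y]
          exact Finset.sum_congr rfl fun i _ => by rw [hcw]
        rw [← hsum]
        exact Submodule.sum_mem _ fun i _ =>
          Submodule.smul_mem _ _ (Submodule.subset_span (hhHa i))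
  -- the line is never inside such a kernel
  have hUker : ∀ a : Fin r → K, a ≠ 0 → ¬ U ≤ LinearMap.ker (φ a) := by
    intro a ha hle
    obtain ⟨hfin, hspan⟩ := hkey a ha
    rw [← hspan] at hle
    exact hext _ inf_le_left hfin hle
  -- basis of the line U
  set e : Basis (Fin 2) L U := Module.finBasisOfFinrankEq L U hU with he
  set u : Fin r → L := (e 0 : Fin r → L) with hudef
  set v : Fin r → L := (e 1 : Fin r → L) with hvdef
  have hu : u ∈ U := (e 0).2
  have hv : v ∈ U := (e 1).2
  have hrepr : ∀ x : U, (x : Fin r → L) = e.repr x 0 • u + e.repr x 1 • v := by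
    intro x
    conv_lhs => rw [← e.sum_repr x]
    rw [Fin.sum_univ_two]
    push_cast
    rfl
  have hindep : ∀ s t : L, s • u + t • v = 0 → s = 0 ∧ t = 0 := by
    intro s t hst
    have h0 : s • e 0 + t • e 1 = (0 : U) := Subtype.val_injective (by push_cast; exact hst)
    have h3 := Fintype.linearIndependent_iff.mp e.linearIndependent ![s, t]
      (by rw [Fin.sum_univ_two]; exact h0)
    exact ⟨h3 0, h3 1⟩
  have hUle : ∀ a : Fin r → K, φ a u = 0 → φ a v = 0 → U ≤ LinearMap.ker (φ a) := by
    intro a h1 h2 z hz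
    rw [LinearMap.mem_ker]
    rw [show z = e.repr ⟨z, hz⟩ 0 • u + e.repr ⟨z, hz⟩ 1 • v from hrepr ⟨z, hz⟩,
      map_add, map_smul, map_smul, h1, h2, smul_zero, smul_zero, add_zero]
  -- K-linearity of a ↦ φ a y
  have hφadd : ∀ (a a' : Fin r → K) (y : Fin r → L), φ (a + a') y = φ a y + φ a' y := by
    intro a a' y
    simp [hφapply, map_add, add_mul, Finset.sum_add_distrib]
  have hφsmul : ∀ (k : K) (a : Fin r → K) (y : Fin r → L),
      φ (k • a) y = algebraMap K L k * φ a y := by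
    intro k a y
    simp [hφapply, map_mul, Finset.mul_sum, mul_assoc]
  -- the K-linear map whose range is the linear set
  set ψ : (Fin r → K) →ₗ[K] (Fin r → L) :=
    { toFun := fun a => φ a v • u - φ a u • v
      map_add' := by
        intro a a'
        simp only [hφadd, add_smul]
        abel
      map_smul' := by
        intro k a
        simp only [hφsmul, RingHom.id_apply]
        rw [← algebraMap_smul L k (φ a v • u - φ a u • v), smul_sub, smul_smul, smul_smul] } with hψdef
  have hψval : ∀ a, ψ a = φ a v • u - φ a u • v := fun a => rfl
  have hψmemU : ∀ a, ψ a ∈ U := fun a => sub_mem (U.smul_mem _ hu) (U.smul_mem _ hv)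
  have hψne : ∀ a : Fin r → K, a ≠ 0 → ψ a ≠ 0 := by
    intro a ha h0
    have h1 : φ a v • u + (-(φ a u)) • v = 0 := by
      rw [neg_smul, ← sub_eq_add_neg]; exact h0
    obtain ⟨h2, h3⟩ := hindep _ _ h1
    exact hUker a ha (hUle a (by rwa [neg_eq_zero] at h3) h2)
  have hψinj : Function.Injective ψ := by
    rw [← LinearMap.ker_eq_bot, eq_bot_iff]
    intro a haker
    rw [Submodule.mem_bot]
    by_contra ha
    exact hψne a ha (LinearMap.mem_ker.mp haker)
  have hφψ : ∀ a, φ a (ψ a) = 0 := by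
    intro a
    rw [hψval, map_sub, map_smul, map_smul, smul_eq_mul, smul_eq_mul]
    ring
  refine ⟨LinearMap.range ψ, ?_, ?_, ?_⟩
  · rintro x ⟨a, rfl⟩
    exact hψmemU a
  · rw [LinearMap.finrank_range_of_inj hψinj]
    simp [Module.finrank_pi]
  · ext P
    constructor
    · rintro ⟨x, hxU', hx0, rfl⟩
      rw [SetLike.mem_coe, LinearMap.mem_range] at hxU'
      obtain ⟨a, rfl⟩ := hxU'
      have ha : a ≠ 0 := by rintro rfl; exact hx0 (map_zero ψ)
      refine ⟨finrank_span_singleton hx0, ?_, V ⊓ (LinearMap.ker (φ a)).restrictScalars K,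
        inf_le_left, (hkey a ha).1, ?_⟩
      · rw [Submodule.span_le, Set.singleton_subset_iff]
        exact hψmemU a
      · rw [(hkey a ha).2, Submodule.span_le, Set.singleton_subset_iff]
        exact LinearMap.mem_ker.mpr (hφψ a)
    · rintro ⟨h1, hPU, H, hHV, hHrk, hPH⟩
      -- extract a generator of P
      have hPne : P ≠ ⊥ := by
        intro h
        rw [h, finrank_bot] at h1
        exact one_ne_zero h1.symm
      obtain ⟨x, hxP, hx0⟩ := Submodule.ne_bot_iff P |>.mp hPne
      have hPx : P = span L {x} := by
        refine (Submodule.eq_of_le_of_finrank_eq ?_ ?_).symm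
        · rw [Submodule.span_le, Set.singleton_subset_iff]; exact hxP
        · rw [finrank_span_singleton hx0, h1]
      -- find a nonzero K-functional vanishing on H
      have hcomap : Submodule.map V.subtype (Submodule.comap V.subtype H) = H := by
        rw [Submodule.map_comap_subtype, inf_eq_right.mpr hHV]
      have hHrk' : Module.finrank K (Submodule.comap V.subtype H) = r - 1 := by
        have := Submodule.finrank_map_subtype_eq V (Submodule.comap V.subtype H)
        rw [hcomap] at this
        rw [← this, hHrk]
      have hlt : Submodule.comap V.subtype H < ⊤ := by
        rw [lt_top_iff_ne_top]
        intro h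
        rw [h, finrank_top, hVrank] at hHrk'
        omega
      obtain ⟨f, hf0, hfH⟩ := Submodule.exists_dual_map_eq_bot_of_lt_top hlt inferInstance
      set a : Fin r → K := fun i => f (b i) with ha_def
      have ha : a ≠ 0 := by
        intro h
        refine hf0 (LinearMap.ext fun y => ?_)
        conv_lhs => rw [← b.sum_repr y]
        rw [map_sum, LinearMap.zero_apply]
        refine Finset.sum_eq_zero fun i _ => ?_
        rw [map_smul, show f (b i) = 0 from congrFun h i, smul_zero]
      have hfker : ∀ y : V, (y : Fin r → L) ∈ H → f y = 0 := by
        intro y hy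
        have hmem : f y ∈ Submodule.map f (Submodule.comap V.subtype H) :=
          ⟨y, Submodule.mem_comap.mpr hy, rfl⟩
        rw [hfH] at hmem
        exact (Submodule.mem_bot K).mp hmem
      have hHker : (H : Set (Fin r → L)) ⊆ LinearMap.ker (φ a) := by
        intro x hx
        have hxV : x ∈ V := hHV hx
        rw [SetLike.mem_coe, LinearMap.mem_ker, hφV a ⟨x, hxV⟩]
        have hsum : (∑ i, a i * b.repr ⟨x, hxV⟩ i) = f ⟨x, hxV⟩ := by
          conv_rhs => rw [← b.sum_repr ⟨x, hxV⟩]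
          rw [map_sum]
          exact Finset.sum_congr rfl fun i _ => by
            rw [map_smul, smul_eq_mul, ha_def, mul_comm]
        rw [hsum, hfker ⟨x, hxV⟩ hx, map_zero]
      have hPker : P ≤ LinearMap.ker (φ a) :=
        le_trans hPH (Submodule.span_le.mpr hHker)
      have huv : ¬(φ a u = 0 ∧ φ a v = 0) := fun ⟨h1', h2'⟩ => hUker a ha (hUle a h1' h2')
      have hxU : x ∈ U := hPU hxP
      have hxrepr := hrepr ⟨x, hxU⟩
      set s : L := e.repr ⟨x, hxU⟩ 0 with hs
      set t : L := e.repr ⟨x, hxU⟩ 1 with ht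
      have hφx : s * φ a u + t * φ a v = 0 := by
        have h2 : φ a x = 0 := LinearMap.mem_ker.mp (hPker hxP)
        rw [show x = s • u + t • v from hxrepr, map_add, map_smul, map_smul,
          smul_eq_mul, smul_eq_mul] at h2
        exact h2
      have hμ : ∃ μ : L, μ ≠ 0 ∧ x = μ • ψ a := by
        by_cases hv0 : φ a v = 0
        · have hu0 : φ a u ≠ 0 := fun h => huv ⟨h, hv0⟩
          have hs0 : s = 0 := by
            have : s * φ a u = 0 := by rwa [hv0, mul_zero, add_zero] at hφx
            exact (mul_eq_zero.mp this).resolve_right hu0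
          have ht0 : t ≠ 0 := by
            intro h
            apply hx0
            rw [show x = s • u + t • v from hxrepr, hs0, h, zero_smul, zero_smul, add_zero]
          refine ⟨-(t / φ a u), by simp [ht0, hu0], ?_⟩
          rw [hψval, hv0, zero_smul, zero_sub, smul_neg, smul_smul,
            show -(t / φ a u) * φ a u = -t by field_simp, neg_smul, neg_neg,
            show x = s • u + t • v from hxrepr, hs0, zero_smul, zero_add]
        · have hs0 : s ≠ 0 := by
            intro h
            have ht0 : t = 0 := by
              have : t * φ a v = 0 := by rwa [h, zero_mul, zero_add] at hφx
              exact (mul_eq_zero.mp this).resolve_right hv0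
            apply hx0
            rw [show x = s • u + t • v from hxrepr, h, ht0, zero_smul, zero_smul, add_zero]
          refine ⟨s / φ a v, by simp [hs0, hv0], ?_⟩
          have ht' : t = -(s * φ a u) / φ a v := by
            field_simp
            linear_combination hφx
          rw [hψval, smul_sub, smul_smul, smul_smul, div_mul_cancel₀ _ hv0,
            show x = s • u + t • v from hxrepr, ht']
          rw [sub_eq_add_neg, ← neg_smul]
          congr 1
          field_simp
      obtain ⟨μ, hμ0, hμx⟩ := hμ
      refine ⟨ψ a, ?_, hψne a ha, ?_⟩
      · exact SetLike.mem_coe.mpr ⟨a, rfl⟩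
      · rw [hPx, hμx]
        exact Submodule.span_singleton_smul_eq (IsUnit.mk0 μ hμ0) _
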